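/- Let S : E → Set E be ρ-comonotone with ρ > −γ/2 for some γ > 0, let 0 ∈ S(z⋆), and let λ ∈ (0,1). Suppose sequences (z^k), (z̄^k), (v^k), (e^k) in E satisfy the inexact relaxed proximal point recursion: z̄^k = z^k − v^k with v^k/γ ∈ S(z̄^k), and z^{k+1} = (1 − λ)z^k + λ(z̄^k + e^k). Then for every k ≥ 0, ‖z^{k+1} − z⋆‖ ≤ ‖z^0 − z⋆‖ + λ Σ_{j=0}^{k} ‖e^j‖. -/

import Mathlib

open InnerProductSpace

/-- boundedness of the iterates of the inexact relaxed proximal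
point recursion: `‖z^{k+1} − z⋆‖ ≤ ‖z^0 − z⋆‖ + λ Σ_{j=0}^{k} ‖e^j‖`. -/
theorem stmt6 {E : Type*} [NormedAddCommGroup E] [InnerProductSpace ℝ E]
    (S : E → Set E) (ρ γ : ℝ) (hγ : 0 < γ) (hρ : ρ > -γ / 2)
    (hS : ∀ z z' v v' : E, v ∈ S z → v' ∈ S z' →
      ⟪v - v', z - z'⟫_ℝ ≥ ρ * ‖v - v'‖^2)
    (zstar : E) (hzstar : (0 : E) ∈ S zstar)
    (lam : ℝ) (hlam0 : 0 < lam) (hlam1 : lam < 1)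
    (z zbar v e : ℕ → E)
    (hbar : ∀ k, zbar k = z k - v k)
    (hv : ∀ k, (1 / γ) • v k ∈ S (zbar k))
    (hz : ∀ k, z (k + 1) = (1 - lam) • z k + lam • (zbar k + e k)) :
    ∀ k : ℕ, ‖z (k + 1) - zstar‖ ≤
      ‖z 0 - zstar‖ + lam * ∑ j ∈ Finset.range (k + 1), ‖e j‖ := by
  have hγ' : γ ≠ 0 := ne_of_gt hγ
  -- key inner product bound (γ-scaled to avoid divisions)
  have hkey : ∀ k, γ * ⟪v k, z k - zstar⟫_ℝ ≥ (γ + ρ) * ‖v k‖^2 := by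
    intro k
    have h := hS (zbar k) zstar ((1 / γ) • v k) 0 (hv k) hzstar
    simp only [sub_zero] at h
    rw [real_inner_smul_left, norm_smul, Real.norm_eq_abs,
      abs_of_pos (by positivity : (0:ℝ) < 1/γ)] at h
    have h2 : γ * ⟪v k, zbar k - zstar⟫_ℝ ≥ ρ * ‖v k‖^2 := by
      have hh := mul_le_mul_of_nonneg_left h (le_of_lt (by positivity : (0:ℝ) < γ^2))
      have e1 : γ^2 * (1/γ * ⟪v k, zbar k - zstar⟫_ℝ) = γ * ⟪v k, zbar k - zstar⟫_ℝ := by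
        field_simp
      have e2 : γ^2 * (ρ * (1/γ * ‖v k‖)^2) = ρ * ‖v k‖^2 := by
        field_simp
      rw [e1, e2] at hh
      exact hh
    have hexp : ⟪v k, z k - zstar⟫_ℝ = ⟪v k, zbar k - zstar⟫_ℝ + ‖v k‖^2 := by
      rw [hbar k, show z k - v k - zstar = (z k - zstar) - v k by abel]
      simp [inner_sub_right, real_inner_self_eq_norm_sq]
    rw [hexp]; nlinarith [h2]
  -- nonexpansiveness of the exact relaxed step
  have hne : ∀ k, ‖z k - lam • v k - zstar‖ ≤ ‖z k - zstar‖ := by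
    intro k
    have hsq : ‖z k - lam • v k - zstar‖^2 ≤ ‖z k - zstar‖^2 := by
      rw [show z k - lam • v k - zstar = (z k - zstar) - lam • v k by abel,
        norm_sub_sq_real, real_inner_smul_right, norm_smul, Real.norm_eq_abs,
        abs_of_pos hlam0]
      have h1 := hkey k
      have hcoef : lam * γ / 2 ≤ γ + ρ := by nlinarith
      have hA := mul_le_mul_of_nonneg_left h1 (by positivity : (0:ℝ) ≤ 2 * lam)
      have hB := mul_le_mul_of_nonneg_right hcoef
        (by positivity : (0:ℝ) ≤ 2 * lam * ‖v k‖^2)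
      nlinarith [real_inner_comm (v k) (z k - zstar), hγ, hA, hB,
        mul_pos hlam0 hγ]
    nlinarith [norm_nonneg (z k - lam • v k - zstar), norm_nonneg (z k - zstar)]
  -- one-step bound
  have hstep : ∀ k, ‖z (k+1) - zstar‖ ≤ ‖z k - zstar‖ + lam * ‖e k‖ := by
    intro k
    have hz' : z (k+1) - zstar = (z k - lam • v k - zstar) + lam • e k := by
      rw [hz k, hbar k, smul_add, smul_sub, sub_smul, one_smul]
      abel
    calc ‖z (k+1) - zstar‖ = ‖(z k - lam • v k - zstar) + lam • e k‖ := by rw [hz']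
      _ ≤ ‖z k - lam • v k - zstar‖ + ‖lam • e k‖ := norm_add_le _ _
      _ ≤ ‖z k - zstar‖ + lam * ‖e k‖ := by
          rw [norm_smul, Real.norm_eq_abs, abs_of_pos hlam0]
          exact add_le_add_left (hne k) _
  intro k
  induction k with
  | zero => simpa using hstep 0
  | succ n ih =>
    calc ‖z (n+1+1) - zstar‖ ≤ ‖z (n+1) - zstar‖ + lam * ‖e (n+1)‖ := hstep (n+1)
      _ ≤ ‖z 0 - zstar‖ + lam * ∑ j ∈ Finset.range (n+1), ‖e j‖ + lam * ‖e (n+1)‖ :=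
          add_le_add_left ih _
      _ = ‖z 0 - zstar‖ + lam * ∑ j ∈ Finset.range (n+1+1), ‖e j‖ := by
          conv_rhs => rw [Finset.sum_range_succ]
          ring
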